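/- arXiv:1211.2944 — 4 statements merged into one kernel-verified Lean document; each statement's English description precedes it below -/
import Mathlib

section
/- Let f0, f1, f2, f3 be natural numbers and let t : ℕ → ℕ satisfy t k = 0 unless 3 ≤ k ≤ N (for some N ≥ 3). Assume the Euler identity f0 - f1 + f2 - f3 = 0, the relation f1 = 4·f0, the relation f2 = Σ_{k=3}^{N} t k, and the relation 12·f0 = Σ_{k=3}^{N} k · t k. Then f3 ≤ f0. -/
/-- For an ideal right-angled polytope in `ℍ⁴`, the number of facets is at most
the number of vertices. -/
theorem facets_le_vertices
    (f0 f1 f2 f3 N : ℕ) (t : ℕ → ℕ) (hN : 3 ≤ N)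
    (ht : ∀ k : ℕ, ¬(3 ≤ k ∧ k ≤ N) → t k = 0)
    (hEuler : (f0 : ℤ) - f1 + f2 - f3 = 0)
    (hEdge : f1 = 4 * f0)
    (hF2 : f2 = ∑ k ∈ Finset.Icc 3 N, t k)
    (hVert : 12 * f0 = ∑ k ∈ Finset.Icc 3 N, k * t k) :
    f3 ≤ f0 := by
  have key : 3 * f2 ≤ 12 * f0 := by
    rw [hF2, hVert, Finset.mul_sum]
    exact Finset.sum_le_sum fun k hk =>
      Nat.mul_le_mul_right _ (Finset.mem_Icc.mp hk).1
  omega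
end

section
/- Let f0, f1, f2, f3 be natural numbers and let t : ℕ → ℕ satisfy t k = 0 unless 3 ≤ k ≤ N (for some N ≥ 3). Assume the Euler identity f0 - f1 + f2 - f3 = 0, the relation f1 = 4·f0, the relation f2 = Σ_{k=3}^{N} t k, and the relation 12·f0 = Σ_{k=3}^{N} k · t k. Then in the real numbers ((f0 : ℝ) - f3 + 4)·π²/3 ≥ 4·π²/3, with equality if and only if t k = 0 for every k ≥ 4. -/
open Real

/-- Quantitative core of the minimal-volume theorem: the volume
`(f₀ - f₃ + 4)·π²/3` of an ideal right-angled polytope in `ℍ⁴` is at least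
`4π²/3`, the volume of the hyperbolic 24-cell, with equality iff all
two-dimensional faces are triangles. -/
theorem volume_ge_24cell
    (f0 f1 f2 f3 N : ℕ) (t : ℕ → ℕ) (hN : 3 ≤ N)
    (ht : ∀ k : ℕ, ¬(3 ≤ k ∧ k ≤ N) → t k = 0)
    (hEuler : (f0 : ℤ) - f1 + f2 - f3 = 0)
    (hEdge : f1 = 4 * f0)
    (hF2 : f2 = ∑ k ∈ Finset.Icc 3 N, t k)
    (hVert : 12 * f0 = ∑ k ∈ Finset.Icc 3 N, k * t k) :
    ((f0 : ℝ) - (f3 : ℝ) + 4) * π ^ 2 / 3 ≥ 4 * π ^ 2 / 3 ∧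
      (((f0 : ℝ) - (f3 : ℝ) + 4) * π ^ 2 / 3 = 4 * π ^ 2 / 3 ↔
        ∀ k : ℕ, 4 ≤ k → t k = 0) := by
  -- Key integer identity: 3(f0 - f3) = Σ (k-3) t k
  have key : 3 * ((f0 : ℤ) - f3) = ∑ k ∈ Finset.Icc 3 N, ((k : ℤ) - 3) * t k := by
    have h1 : (f1 : ℤ) = 4 * f0 := by exact_mod_cast congrArg (Nat.cast : ℕ → ℤ) hEdge
    have h2 : (f2 : ℤ) = ∑ k ∈ Finset.Icc 3 N, (t k : ℤ) := by
      exact_mod_cast congrArg (Nat.cast : ℕ → ℤ) hF2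
    have h3 : 12 * (f0 : ℤ) = ∑ k ∈ Finset.Icc 3 N, (k : ℤ) * t k := by
      exact_mod_cast congrArg (Nat.cast : ℕ → ℤ) hVert
    have : 3 * ((f0 : ℤ) - f3) = 12 * (f0 : ℤ) - 3 * f2 := by linarith
    rw [this, h3, h2, Finset.mul_sum, ← Finset.sum_sub_distrib]
    apply Finset.sum_congr rfl
    intro k _
    ring
  have hterm : ∀ k ∈ Finset.Icc 3 N, (0 : ℤ) ≤ ((k : ℤ) - 3) * t k := by
    intro k hk
    rw [Finset.mem_Icc] at hk
    have : (3 : ℤ) ≤ (k : ℤ) := by exact_mod_cast hk.1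
    exact mul_nonneg (by linarith) (Int.natCast_nonneg _)
  have hsum : (0 : ℤ) ≤ ∑ k ∈ Finset.Icc 3 N, ((k : ℤ) - 3) * t k :=
    Finset.sum_nonneg hterm
  have hf03 : (f3 : ℤ) ≤ f0 := by linarith
  have hπ : (0 : ℝ) < π ^ 2 := by positivity
  have hge : ((f0 : ℝ) - (f3 : ℝ) + 4) * π ^ 2 / 3 ≥ 4 * π ^ 2 / 3 := by
    have : (f3 : ℝ) ≤ f0 := by exact_mod_cast hf03
    have h4 : (4 : ℝ) ≤ (f0 : ℝ) - f3 + 4 := by linarith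
    have := mul_le_mul_of_nonneg_right h4 (le_of_lt hπ)
    linarith
  refine ⟨hge, ?_⟩
  constructor
  · intro heq
    -- equality forces f0 = f3
    have hf : (f0 : ℝ) - f3 = 0 := by
      have := mul_right_cancel₀ (ne_of_gt hπ) (by linarith [heq] :
        ((f0 : ℝ) - (f3 : ℝ) + 4) * π ^ 2 = 4 * π ^ 2)
      linarith
    have hfz : (f0 : ℤ) - f3 = 0 := by exact_mod_cast hf
    have hzero : ∑ k ∈ Finset.Icc 3 N, ((k : ℤ) - 3) * t k = 0 := by
      rw [← key, hfz]; ring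
    have hall := (Finset.sum_eq_zero_iff_of_nonneg hterm).mp hzero
    intro k hk4
    by_cases hkN : k ≤ N
    · have hmem : k ∈ Finset.Icc 3 N := Finset.mem_Icc.mpr ⟨by omega, hkN⟩
      have := hall k hmem
      have hkpos : (0 : ℤ) < (k : ℤ) - 3 := by
        have : (4 : ℤ) ≤ (k : ℤ) := by exact_mod_cast hk4
        linarith
      have : (t k : ℤ) = 0 := by
        rcases mul_eq_zero.mp this with h | h
        · exact absurd h (ne_of_gt hkpos)
        · exact h
      exact_mod_cast this
    · exact ht k (by omega)
  · intro hall
    have hzero : ∑ k ∈ Finset.Icc 3 N, ((k : ℤ) - 3) * t k = 0 := by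
      apply Finset.sum_eq_zero
      intro k hk
      rw [Finset.mem_Icc] at hk
      rcases Nat.lt_or_ge k 4 with h4 | h4
      · have hk3 : k = 3 := by omega
        subst hk3; norm_num
      · rw [hall k h4]; norm_num
    have hfz : (f0 : ℤ) = f3 := by
      have := key
      rw [hzero] at this
      linarith
    have : (f0 : ℝ) = f3 := by exact_mod_cast hfz
    rw [this]; ring
end

section
/- Let B be the Minkowski bilinear form on ℝ^5 = (Fin 5 → ℝ) defined by B(x, y) = x 0·y 0 + x 1·y 1 + x 2·y 2 + x 3·y 3 - x 4·y 4, and let a > 1 and b > 1 be real numbers. Then there do not exist vectors e₁, e₂, e₃, e₄ ∈ ℝ^5 with B(eᵢ, eᵢ) = 1 for all i, B(e₁, e₂) = B(e₂, e₃) = B(e₃, e₄) = B(e₄, e₁) = 0, B(e₁, e₃) = -a, and B(e₂, e₄) = -b. -/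
/-- Two orthogonal vectors of negative Minkowski norm cannot exist in signature (4,1). -/
lemma no_two_orthogonal_negative
    (x0 x1 x2 x3 x4 y0 y1 y2 y3 y4 : ℝ)
    (hx : x0^2 + x1^2 + x2^2 + x3^2 < x4^2)
    (hy : y0^2 + y1^2 + y2^2 + y3^2 < y4^2)
    (hxy : x0*y0 + x1*y1 + x2*y2 + x3*y3 = x4*y4) : False := by
  have hSx : (0:ℝ) ≤ x0^2 + x1^2 + x2^2 + x3^2 := by positivity
  have hSy : (0:ℝ) ≤ y0^2 + y1^2 + y2^2 + y3^2 := by positivity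
  have h1 : (x0^2 + x1^2 + x2^2 + x3^2) * (y0^2 + y1^2 + y2^2 + y3^2) < x4^2 * y4^2 := by
    nlinarith
  have hp : (x0*y0 + x1*y1 + x2*y2 + x3*y3)^2
      ≤ (x0^2 + x1^2 + x2^2 + x3^2) * (y0^2 + y1^2 + y2^2 + y3^2) := by
    nlinarith [sq_nonneg (x0*y1 - x1*y0), sq_nonneg (x0*y2 - x2*y0), sq_nonneg (x0*y3 - x3*y0),
      sq_nonneg (x1*y2 - x2*y1), sq_nonneg (x1*y3 - x3*y1), sq_nonneg (x2*y3 - x3*y2)]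
  have h2 : x4^2 * y4^2 = (x0*y0 + x1*y1 + x2*y2 + x3*y3)^2 := by rw [hxy]; ring
  linarith

/-- No `(4,0)` circuit: there are no vectors `e₁, …, e₄` in Minkowski space
`ℝ^{4,1}` with the Gram relations of a `(4,0)` circuit of facets. -/
theorem no_four_circuit
    (B : (Fin 5 → ℝ) → (Fin 5 → ℝ) → ℝ)
    (hB : ∀ x y : Fin 5 → ℝ,
      B x y = x 0 * y 0 + x 1 * y 1 + x 2 * y 2 + x 3 * y 3 - x 4 * y 4)
    (a b : ℝ) (ha : 1 < a) (hb : 1 < b) :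
    ¬ ∃ e : Fin 4 → (Fin 5 → ℝ),
      (∀ i : Fin 4, B (e i) (e i) = 1) ∧
      B (e 0) (e 1) = 0 ∧ B (e 1) (e 2) = 0 ∧ B (e 2) (e 3) = 0 ∧ B (e 3) (e 0) = 0 ∧
      B (e 0) (e 2) = -a ∧ B (e 1) (e 3) = -b := by
  rintro ⟨e, h1, h01, h12, h23, h30, h02, h13⟩
  have H00 := h1 0; have H11 := h1 1; have H22 := h1 2; have H33 := h1 3
  rw [hB] at H00 H11 H22 H33 h01 h12 h23 h30 h02 h13
  have hx : (e 0 0 + e 2 0)^2 + (e 0 1 + e 2 1)^2 + (e 0 2 + e 2 2)^2 + (e 0 3 + e 2 3)^2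
      < (e 0 4 + e 2 4)^2 := by
    have h : (e 0 0 + e 2 0)^2 + (e 0 1 + e 2 1)^2 + (e 0 2 + e 2 2)^2 + (e 0 3 + e 2 3)^2
        - (e 0 4 + e 2 4)^2 = 2 - 2*a := by linear_combination H00 + H22 + 2*h02
    linarith [h]
  have hy : (e 1 0 + e 3 0)^2 + (e 1 1 + e 3 1)^2 + (e 1 2 + e 3 2)^2 + (e 1 3 + e 3 3)^2
      < (e 1 4 + e 3 4)^2 := by
    have h : (e 1 0 + e 3 0)^2 + (e 1 1 + e 3 1)^2 + (e 1 2 + e 3 2)^2 + (e 1 3 + e 3 3)^2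
        - (e 1 4 + e 3 4)^2 = 2 - 2*b := by linear_combination H11 + H33 + 2*h13
    linarith [h]
  have hxy : (e 0 0 + e 2 0)*(e 1 0 + e 3 0) + (e 0 1 + e 2 1)*(e 1 1 + e 3 1)
      + (e 0 2 + e 2 2)*(e 1 2 + e 3 2) + (e 0 3 + e 2 3)*(e 1 3 + e 3 3)
      = (e 0 4 + e 2 4)*(e 1 4 + e 3 4) := by linear_combination h01 + h12 + h23 + h30
  exact no_two_orthogonal_negative _ _ _ _ _ _ _ _ _ _ hx hy hxy
end

section
/- For every natural number n ≥ 7, one has (n - 3) · (choose (n/2) 3 + choose ((n+1)/2) 3) ≤ 24 · (choose (n/2) 4 + choose ((n+1)/2) 4), where n/2 and (n+1)/2 denote natural-number (floor) division and choose is the binomial coefficient. -/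
/-- The numerical inequality behind the dimension bound: for `n ≥ 7`, the
Nikulin–Khovanskiĭ upper bound for `f³₄` is at most `24`. -/
theorem nikulin_khovanskii_bound (n : ℕ) (hn : 7 ≤ n) :
    (n - 3) * (Nat.choose (n / 2) 3 + Nat.choose ((n + 1) / 2) 3)
      ≤ 24 * (Nat.choose (n / 2) 4 + Nat.choose ((n + 1) / 2) 4) := by
  rcases eq_or_lt_of_le hn with h7 | h8
  · subst h7; decide
  · rcases Nat.even_or_odd n with ⟨k, hk⟩ | ⟨k, hk⟩
    · -- n = k + k, k ≥ 4
      obtain ⟨m, rfl⟩ : ∃ m, k = m + 4 := ⟨k - 4, by omega⟩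
      subst hk
      have e1 : (m + 4 + (m + 4)) / 2 = m + 4 := by omega
      have e2 : (m + 4 + (m + 4) + 1) / 2 = m + 4 := by omega
      have e3 : m + 4 + (m + 4) - 3 = 2 * m + 5 := by omega
      rw [e1, e2, e3]
      have h4 := Nat.choose_succ_right_eq (m + 4) 3
      have e4 : m + 4 - 3 = m + 1 := by omega
      rw [e4] at h4
      nlinarith [h4, Nat.zero_le (Nat.choose (m + 4) 3)]
    · -- n = 2k + 1, k ≥ 4
      obtain ⟨m, rfl⟩ : ∃ m, k = m + 4 := ⟨k - 4, by omega⟩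
      subst hk
      have e1 : (2 * (m + 4) + 1) / 2 = m + 4 := by omega
      have e2 : (2 * (m + 4) + 1 + 1) / 2 = m + 5 := by omega
      have e3 : 2 * (m + 4) + 1 - 3 = 2 * m + 6 := by omega
      rw [e1, e2, e3]
      have h4a := Nat.choose_succ_right_eq (m + 4) 3
      have h4b := Nat.choose_succ_right_eq (m + 5) 3
      have e4 : m + 4 - 3 = m + 1 := by omega
      have e5 : m + 5 - 3 = m + 2 := by omega
      rw [e4] at h4a
      rw [e5] at h4b
      nlinarith [h4a, h4b, Nat.zero_le (Nat.choose (m + 4) 3),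
        Nat.zero_le (Nat.choose (m + 5) 3)]
end
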